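/- The scattering operator of the quantum walk on an arbitrary graph is unitary: let G be a finite simple graph in which every vertex has degree ≥ 1, and let the walker's state be a function ψ : Dart(G) → ℂ (one amplitude per dart, i.e., per oriented edge, corresponding to the polarity-indexed amplitudes ψ^{σ(u,v)}_{(u,v)}). Define S : (Dart(G) → ℂ) → (Dart(G) → ℂ) by (S ψ)(d) = Σ_{d' : source d' = source d} ((2/deg(source d)) − δ_{d,d'}) · ψ(d'), i.e., S applies the diffusion D_{deg u} to the amplitudes of the darts emanating from each vertex u. Then S preserves the ℓ² norm: Σ_{d} |(S ψ)(d)|² = Σ_{d} |ψ(d)|² for every ψ. -/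

import Mathlib

open Finset

lemma key_sum {α : Type*} [DecidableEq α] (T : Finset α) (f : α → ℂ)
    (hT : T.Nonempty) :
    ∑ d ∈ T, Complex.normSq ((2 / (T.card : ℂ)) * (∑ d' ∈ T, f d') - f d) =
      ∑ d ∈ T, Complex.normSq (f d) := by
  have hn : (T.card : ℂ) ≠ 0 := by
    exact_mod_cast Nat.cast_ne_zero.mpr (Finset.card_pos.mpr hT).ne'
  set n : ℂ := (T.card : ℂ) with hndef
  set S : ℂ := ∑ d' ∈ T, f d' with hSdef
  apply Complex.ofReal_injective
  push_cast
  calc (∑ d ∈ T, (Complex.normSq ((2 / n) * S - f d) : ℂ))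
      = ∑ d ∈ T, ((2 / n) * S - f d) * (starRingEnd ℂ) ((2 / n) * S - f d) := by
        simp only [Complex.mul_conj]
    _ = ∑ d ∈ T, ((4 / (n * n)) * (S * (starRingEnd ℂ) S)
          - (2 / n) * (S * (starRingEnd ℂ) (f d))
          - (2 / n) * ((starRingEnd ℂ) S * f d)
          + f d * (starRingEnd ℂ) (f d)) := by
        refine Finset.sum_congr rfl fun d hd => ?_
        have : (starRingEnd ℂ) n = n := by
          rw [hndef]; exact Complex.conj_natCast _
        simp only [map_sub, map_mul, map_div₀, this, Complex.conj_ofNat]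
        field_simp
        ring
    _ = T.card • ((4 / (n * n)) * (S * (starRingEnd ℂ) S))
          - (2 / n) * (S * (starRingEnd ℂ) S)
          - (2 / n) * ((starRingEnd ℂ) S * S)
          + ∑ d ∈ T, f d * (starRingEnd ℂ) (f d) := by
        simp only [Finset.sum_add_distrib, Finset.sum_sub_distrib, Finset.sum_const,
          ← Finset.mul_sum, ← map_sum, ← hSdef]
    _ = ∑ d ∈ T, f d * (starRingEnd ℂ) (f d) := by
        rw [nsmul_eq_mul, ← hndef]
        field_simp
        ring
    _ = ∑ d ∈ T, (Complex.normSq (f d) : ℂ) := by simp only [Complex.mul_conj]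

/-- The scattering operator of the quantum walk on a graph `G`: the state is one complex
amplitude per dart (oriented edge), and at each vertex `u` the diffusion
`D_{deg u} = (2/deg u)·J − I` is applied to the amplitudes of the darts emanating from `u`:
`(S ψ)(d) = Σ_{d' : source d' = source d} ((2/deg(source d)) − δ_{d,d'}) · ψ(d')`. -/
noncomputable def graphScatter {V : Type*} [Fintype V] [DecidableEq V]
    (G : SimpleGraph V) [DecidableRel G.Adj] (ψ : G.Dart → ℂ) : G.Dart → ℂ :=
  fun d => ∑ d' : G.Dart,
    (if d'.fst = d.fst then (2 / (G.degree d.fst : ℂ)) - (if d = d' then 1 else 0) else 0) *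
      ψ d'

/-- The scattering operator of the quantum walk on an arbitrary graph (every vertex of
degree ≥ 1) preserves the ℓ² norm: `Σ_d |(S ψ)(d)|² = Σ_d |ψ(d)|²`. -/
theorem graphScatter_norm_preserving {V : Type*} [Fintype V] [DecidableEq V]
    (G : SimpleGraph V) [DecidableRel G.Adj] (hdeg : ∀ v : V, 1 ≤ G.degree v)
    (ψ : G.Dart → ℂ) :
    ∑ d : G.Dart, ‖graphScatter G ψ d‖ ^ 2 =
      ∑ d : G.Dart, ‖ψ d‖ ^ 2 := by
  simp only [Complex.sq_norm]
  rw [← Finset.sum_fiberwise univ (fun d : G.Dart => d.fst)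
        (fun d => Complex.normSq (graphScatter G ψ d)),
      ← Finset.sum_fiberwise univ (fun d : G.Dart => d.fst)
        (fun d => Complex.normSq (ψ d))]
  refine Finset.sum_congr rfl fun v _ => ?_
  set T : Finset G.Dart := univ.filter (fun d => d.fst = v) with hT
  have hcard : T.card = G.degree v := G.dart_fst_fiber_card_eq_degree v
  have hne : T.Nonempty := Finset.card_pos.mp (by rw [hcard]; exact hdeg v)
  have hscat : ∀ d ∈ T, graphScatter G ψ d =
      (2 / (T.card : ℂ)) * (∑ d' ∈ T, ψ d') - ψ d := by
    intro d hd
    have hdv : d.fst = v := (Finset.mem_filter.mp hd).2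
    rw [graphScatter]
    have : ∀ d' : G.Dart,
        (if d'.fst = d.fst then (2 / (G.degree d.fst : ℂ)) - (if d = d' then 1 else 0) else 0)
          * ψ d'
        = (if d' ∈ T then ((2 / (T.card : ℂ)) * ψ d' - (if d = d' then 1 else 0) * ψ d')
            else 0) := by
      intro d'
      rw [hcard, hT, hdv]
      by_cases h : d'.fst = v <;> simp [h, sub_mul]
    simp only [this]
    rw [Finset.sum_ite_mem, Finset.univ_inter, Finset.sum_sub_distrib, ← Finset.mul_sum]
    congr 1
    rw [Finset.sum_eq_single d]
    · simp
    · intro b _ hb; simp [Ne.symm hb]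
    · intro h; exact absurd hd h
  calc ∑ d ∈ T, Complex.normSq (graphScatter G ψ d)
      = ∑ d ∈ T, Complex.normSq ((2 / (T.card : ℂ)) * (∑ d' ∈ T, ψ d') - ψ d) :=
        Finset.sum_congr rfl fun d hd => by rw [hscat d hd]
    _ = ∑ d ∈ T, Complex.normSq (ψ d) := key_sum T ψ hne
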